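/- Let A and B be independent random elements on a probability space, g : ℝ^p × ℝ^q → ℝ^n measurable with E[‖g(A,B)‖²] < ∞, and let Q be an n×n real orthogonal matrix (QQᵀ = QᵀQ = I). Write D(h) := Cov(E[h | σ(A)]), D^tot(h) := Cov(h − E[h | σ(B)]) and Σ(h) := Cov(h) for a square-integrable ℝ^n-valued random vector h. Then for h = g(A,B): D(Qh) = Q D(h) Qᵀ, D^tot(Qh) = Q D^tot(h) Qᵀ, Σ(Qh) = Q Σ(h) Qᵀ, and consequently trace(D(Qh))/trace(Σ(Qh)) = trace(D(h))/trace(Σ(h)), trace(D^tot(Qh))/trace(Σ(Qh)) = trace(D^tot(h))/trace(Σ(h)), ‖D(Qh)‖_F/‖Σ(Qh)‖_F = ‖D(h)‖_F/‖Σ(h)‖_F and ‖D^tot(Qh)‖_F/‖Σ(Qh)‖_F = ‖D^tot(h)‖_F/‖Σ(h)‖_F (whenever the denominators are nonzero). -/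

import Mathlib

open MeasureTheory ProbabilityTheory

/-- The covariance matrix of an `ℝ^n`-valued random vector `h`:
`(Cov h)_{i j} = E[(h_i − E h_i)(h_j − E h_j)]`. -/
noncomputable def covMatrix {Ω : Type*} [MeasurableSpace Ω] (P : Measure Ω) {n : ℕ}
    (h : Ω → Fin n → ℝ) : Matrix (Fin n) (Fin n) ℝ :=
  fun i j => ∫ ω, (h ω i - ∫ ω', h ω' i ∂P) * (h ω j - ∫ ω', h ω' j ∂P) ∂P

/-- First-order covariance matrix `D(h) = Cov(E[h | m])` (componentwise conditional
expectation with respect to the sub-σ-algebra `m`). -/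
noncomputable def condCovMatrix {Ω : Type*} [mΩ : MeasurableSpace Ω] (P : Measure Ω)
    (m : MeasurableSpace Ω) {n : ℕ} (h : Ω → Fin n → ℝ) : Matrix (Fin n) (Fin n) ℝ :=
  @covMatrix Ω mΩ P n (fun ω i => (P[fun ω' => h ω' i | m]) ω)

/-- Total-effect covariance matrix `Dᵗᵒᵗ(h) = Cov(h − E[h | m])`. -/
noncomputable def totCovMatrix {Ω : Type*} [mΩ : MeasurableSpace Ω] (P : Measure Ω)
    (m : MeasurableSpace Ω) {n : ℕ} (h : Ω → Fin n → ℝ) : Matrix (Fin n) (Fin n) ℝ :=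
  @covMatrix Ω mΩ P n (fun ω i => h ω i - (P[fun ω' => h ω' i | m]) ω)

/-- The Frobenius norm `‖S‖_F = √(trace (S Sᵀ))` of a square real matrix. -/
noncomputable def frobNorm {n : ℕ} (S : Matrix (Fin n) (Fin n) ℝ) : ℝ :=
  Real.sqrt (Matrix.trace (S * S.transpose))

/-! ### Auxiliary lemmas -/

lemma integrable_mul_of_memℒp_two {Ω : Type*} [MeasurableSpace Ω] {P : Measure Ω}
    {f g : Ω → ℝ} (hf : MemLp f 2 P) (hg : MemLp g 2 P) :
    Integrable (fun ω => f ω * g ω) P := by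
  rw [← memLp_one_iff_integrable]
  have h := hf.smul (φ := g) hg (p := 2) (q := 2) (r := 1)
    (hpqr := ⟨by rw [inv_one, ENNReal.inv_two_add_inv_two]⟩)
  exact (by simpa [Pi.smul_apply, smul_eq_mul, mul_comm] using h : MemLp (f * g) 1 P)

lemma memℒp_two_condexp {Ω : Type*} [mΩ : MeasurableSpace Ω] {P : Measure Ω}
    [IsProbabilityMeasure P] {m : MeasurableSpace Ω} (hm : m ≤ mΩ)
    {f : Ω → ℝ} (hf : MemLp f 2 P) : MemLp (P[f|m]) 2 P := by
  set F : Lp ℝ 2 P := hf.toLp f with hF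
  have hFf : (F : Ω → ℝ) =ᵐ[P] f := hf.coeFn_toLp
  have key : ((condExpL2 ℝ ℝ hm F : Lp ℝ 2 P) : Ω → ℝ) =ᵐ[P] P[f|m] := by
    refine ae_eq_condExp_of_forall_setIntegral_eq hm (hf.integrable one_le_two) ?_ ?_ ?_
    · intro s hs hμs
      exact integrableOn_condExpL2_of_measure_ne_top hm hμs.ne F
    · intro s hs hμs
      rw [integral_condExpL2_eq (𝕜 := ℝ) hm F hs hμs.ne]
      exact integral_congr_ae (ae_restrict_of_ae hFf)
    · exact aestronglyMeasurable_condExpL2 hm F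
  exact MemLp.ae_eq key (Lp.memLp _)

lemma covMatrix_congr_ae {Ω : Type*} [MeasurableSpace Ω] {P : Measure Ω} {n : ℕ}
    {f g : Ω → Fin n → ℝ} (hfg : ∀ i, (fun ω => f ω i) =ᵐ[P] (fun ω => g ω i)) :
    covMatrix P f = covMatrix P g := by
  funext i j
  unfold covMatrix
  rw [integral_congr_ae (hfg i), integral_congr_ae (hfg j)]
  refine integral_congr_ae ?_
  filter_upwards [hfg i, hfg j] with ω h1 h2
  rw [h1, h2]

lemma covMatrix_mulVec {Ω : Type*} [MeasurableSpace Ω] (P : Measure Ω) [IsProbabilityMeasure P]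
    {n : ℕ} (Q : Matrix (Fin n) (Fin n) ℝ) (f : Ω → Fin n → ℝ)
    (hf : ∀ i, MemLp (fun ω => f ω i) 2 P) :
    covMatrix P (fun ω => Q.mulVec (f ω)) = Q * covMatrix P f * Q.transpose := by
  have hint1 : ∀ k, Integrable (fun ω => f ω k) P := fun k => (hf k).integrable one_le_two
  set μ : Fin n → ℝ := fun k => ∫ ω, f ω k ∂P with hμ
  have hc : ∀ k, MemLp (fun ω => f ω k - μ k) 2 P := fun k => (hf k).sub (memLp_const _)
  have hcc : ∀ k l, Integrable (fun ω => (f ω k - μ k) * (f ω l - μ l)) P :=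
    fun k l => integrable_mul_of_memℒp_two (hc k) (hc l)
  have hmean : ∀ i, ∫ ω, Q.mulVec (f ω) i ∂P = ∑ k, Q i k * μ k := by
    intro i
    simp only [Matrix.mulVec, dotProduct]
    rw [integral_finset_sum _ (fun k _ => (hint1 k).const_mul _)]
    simp [integral_const_mul, hμ]
  funext i j
  show (∫ ω, (Q.mulVec (f ω) i - ∫ ω', Q.mulVec (f ω') i ∂P)
      * (Q.mulVec (f ω) j - ∫ ω', Q.mulVec (f ω') j ∂P) ∂P) = _
  have hcent : ∀ (i : Fin n) ω, Q.mulVec (f ω) i - ∫ ω', Q.mulVec (f ω') i ∂P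
      = ∑ k, Q i k * (f ω k - μ k) := by
    intro i ω
    rw [hmean i]
    simp [Matrix.mulVec, dotProduct, mul_sub, Finset.sum_sub_distrib]
  have hprod : ∀ ω, (Q.mulVec (f ω) i - ∫ ω', Q.mulVec (f ω') i ∂P)
      * (Q.mulVec (f ω) j - ∫ ω', Q.mulVec (f ω') j ∂P)
      = ∑ k, ∑ l, (Q i k * Q j l) * ((f ω k - μ k) * (f ω l - μ l)) := by
    intro ω
    rw [hcent i ω, hcent j ω, Finset.sum_mul_sum]
    refine Finset.sum_congr rfl fun k _ => Finset.sum_congr rfl fun l _ => by ring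
  calc (∫ ω, (Q.mulVec (f ω) i - ∫ ω', Q.mulVec (f ω') i ∂P)
      * (Q.mulVec (f ω) j - ∫ ω', Q.mulVec (f ω') j ∂P) ∂P)
      = ∫ ω, ∑ k, ∑ l, (Q i k * Q j l) * ((f ω k - μ k) * (f ω l - μ l)) ∂P := by
        exact integral_congr_ae (Filter.Eventually.of_forall hprod)
    _ = ∑ k, ∑ l, (Q i k * Q j l) * ∫ ω, (f ω k - μ k) * (f ω l - μ l) ∂P := by
        rw [integral_finset_sum _ (fun k _ =>
          integrable_finset_sum _ (fun l _ => (hcc k l).const_mul _))]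
        refine Finset.sum_congr rfl fun k _ => ?_
        rw [integral_finset_sum _ (fun l _ => (hcc k l).const_mul _)]
        exact Finset.sum_congr rfl fun l _ => integral_const_mul _ _
    _ = (Q * covMatrix P f * Q.transpose) i j := by
        simp only [Matrix.mul_apply, Matrix.transpose_apply, covMatrix, Finset.sum_mul]
        rw [Finset.sum_comm]
        refine Finset.sum_congr rfl fun k _ => Finset.sum_congr rfl fun l _ => by ring

lemma condexp_mulVec_ae {Ω : Type*} [mΩ : MeasurableSpace Ω] {P : Measure Ω}
    (m : MeasurableSpace Ω) {n : ℕ} (Q : Matrix (Fin n) (Fin n) ℝ) {h : Ω → Fin n → ℝ}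
    (hh : ∀ k, Integrable (fun ω => h ω k) P) (i : Fin n) :
    (P[fun ω => Q.mulVec (h ω) i | m])
      =ᵐ[P] fun ω => ∑ k, Q i k * (P[fun ω' => h ω' k | m]) ω := by
  have heq : (fun ω => Q.mulVec (h ω) i) = ∑ k : Fin n, (Q i k • fun ω => h ω k) := by
    funext ω
    simp [Matrix.mulVec, dotProduct, Finset.sum_apply]
  rw [heq]
  refine (condExp_finsetSum (fun k _ => (hh k).smul _) m).trans ?_
  have hsm : ∀ᵐ ω ∂P, ∀ k : Fin n,
      (P[Q i k • (fun ω' => h ω' k)|m]) ω = Q i k • (P[fun ω' => h ω' k|m]) ω :=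
    ae_all_iff.2 fun k => condExp_smul _ _ m
  filter_upwards [hsm] with ω hω
  simp only [Finset.sum_apply, hω, smul_eq_mul]

lemma trace_conj {n : ℕ} {Q : Matrix (Fin n) (Fin n) ℝ} (hQ2 : Q.transpose * Q = 1)
    (S : Matrix (Fin n) (Fin n) ℝ) : (Q * S * Q.transpose).trace = S.trace := by
  rw [Matrix.trace_mul_cycle, hQ2, Matrix.one_mul]

lemma frob_conj {n : ℕ} {Q : Matrix (Fin n) (Fin n) ℝ} (hQ2 : Q.transpose * Q = 1)
    (S : Matrix (Fin n) (Fin n) ℝ) : frobNorm (Q * S * Q.transpose) = frobNorm S := by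
  unfold frobNorm
  congr 1
  have key : (Q * S * Q.transpose) * (Q * S * Q.transpose).transpose
      = Q * (S * S.transpose) * Q.transpose := by
    simp only [Matrix.transpose_mul, Matrix.transpose_transpose]
    calc Q * S * Q.transpose * (Q * (S.transpose * Q.transpose))
        = Q * S * ((Q.transpose * Q) * (S.transpose * Q.transpose)) := by
          simp only [Matrix.mul_assoc]
      _ = Q * (S * S.transpose) * Q.transpose := by
          rw [hQ2, Matrix.one_mul]
          simp only [Matrix.mul_assoc]
  rw [key, trace_conj hQ2]

/-- orthogonal invariance of Proposition 3: under an orthogonal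
transformation `Q` of the outputs, `D(Qh) = Q D(h) Qᵀ`, `Dᵗᵒᵗ(Qh) = Q Dᵗᵒᵗ(h) Qᵀ`,
`Σ(Qh) = Q Σ(h) Qᵀ`, and consequently both types of dependent generalized sensitivity
indices (trace ratios and Frobenius-norm ratios) are unchanged whenever the denominators
are nonzero. -/
theorem dGSI_orthogonal_invariance
    {Ω : Type*} [MeasurableSpace Ω] (P : Measure Ω) [IsProbabilityMeasure P]
    (p q n : ℕ)
    (A : Ω → Fin p → ℝ) (B : Ω → Fin q → ℝ)
    (hA : Measurable A) (hB : Measurable B) (hAB : IndepFun A B P)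
    (g : (Fin p → ℝ) × (Fin q → ℝ) → Fin n → ℝ) (hg : Measurable g)
    (hint : MemLp (fun ω => g (A ω, B ω)) 2 P)
    (Q : Matrix (Fin n) (Fin n) ℝ) (hQ1 : Q * Q.transpose = 1) (hQ2 : Q.transpose * Q = 1)
    (h Qh : Ω → Fin n → ℝ)
    (hh : h = fun ω => g (A ω, B ω)) (hQh : Qh = fun ω => Q.mulVec (h ω)) :
    condCovMatrix P (MeasurableSpace.comap A inferInstance) Qh
        = Q * condCovMatrix P (MeasurableSpace.comap A inferInstance) h * Q.transpose ∧
    totCovMatrix P (MeasurableSpace.comap B inferInstance) Qh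
        = Q * totCovMatrix P (MeasurableSpace.comap B inferInstance) h * Q.transpose ∧
    covMatrix P Qh = Q * covMatrix P h * Q.transpose ∧
    ((covMatrix P Qh).trace ≠ 0 → (covMatrix P h).trace ≠ 0 →
      (condCovMatrix P (MeasurableSpace.comap A inferInstance) Qh).trace
          / (covMatrix P Qh).trace
        = (condCovMatrix P (MeasurableSpace.comap A inferInstance) h).trace
          / (covMatrix P h).trace) ∧
    ((covMatrix P Qh).trace ≠ 0 → (covMatrix P h).trace ≠ 0 →
      (totCovMatrix P (MeasurableSpace.comap B inferInstance) Qh).trace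
          / (covMatrix P Qh).trace
        = (totCovMatrix P (MeasurableSpace.comap B inferInstance) h).trace
          / (covMatrix P h).trace) ∧
    (frobNorm (covMatrix P Qh) ≠ 0 → frobNorm (covMatrix P h) ≠ 0 →
      frobNorm (condCovMatrix P (MeasurableSpace.comap A inferInstance) Qh)
          / frobNorm (covMatrix P Qh)
        = frobNorm (condCovMatrix P (MeasurableSpace.comap A inferInstance) h)
          / frobNorm (covMatrix P h)) ∧
    (frobNorm (covMatrix P Qh) ≠ 0 → frobNorm (covMatrix P h) ≠ 0 →
      frobNorm (totCovMatrix P (MeasurableSpace.comap B inferInstance) Qh)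
          / frobNorm (covMatrix P Qh)
        = frobNorm (totCovMatrix P (MeasurableSpace.comap B inferInstance) h)
          / frobNorm (covMatrix P h)) := by
  have hmA : MeasurableSpace.comap A inferInstance ≤ _ := hA.comap_le
  have hmB : MeasurableSpace.comap B inferInstance ≤ _ := hB.comap_le
  have hcomp : ∀ i, MemLp (fun ω => h ω i) 2 P := by
    intro i
    rw [hh]
    exact (ContinuousLinearMap.proj (R := ℝ) (φ := fun _ : Fin n => ℝ) i).comp_memLp' hint
  have hint1 : ∀ k, Integrable (fun ω => h ω k) P := fun k => (hcomp k).integrable one_le_two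
  have e3 : covMatrix P Qh = Q * covMatrix P h * Q.transpose := by
    rw [hQh]; exact covMatrix_mulVec P Q h hcomp
  have e1 : condCovMatrix P (MeasurableSpace.comap A inferInstance) Qh = Q * condCovMatrix P (MeasurableSpace.comap A inferInstance) h * Q.transpose := by
    have step : condCovMatrix P (MeasurableSpace.comap A inferInstance) Qh
        = covMatrix P (fun ω => Q.mulVec (fun k => (P[fun ω' => h ω' k | (MeasurableSpace.comap A inferInstance)]) ω)) := by
      unfold condCovMatrix
      refine covMatrix_congr_ae fun i => ?_
      simp only [hQh]
      refine (condexp_mulVec_ae (MeasurableSpace.comap A inferInstance) Q hint1 i).trans ?_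
      exact Filter.Eventually.of_forall fun ω => by
        simp [Matrix.mulVec, dotProduct]
    rw [step, covMatrix_mulVec P Q _ (fun k => memℒp_two_condexp hmA (hcomp k))]
    rfl
  have e2 : totCovMatrix P (MeasurableSpace.comap B inferInstance) Qh = Q * totCovMatrix P (MeasurableSpace.comap B inferInstance) h * Q.transpose := by
    have step : totCovMatrix P (MeasurableSpace.comap B inferInstance) Qh
        = covMatrix P (fun ω => Q.mulVec (fun k => h ω k - (P[fun ω' => h ω' k | (MeasurableSpace.comap B inferInstance)]) ω)) := by
      unfold totCovMatrix
      refine covMatrix_congr_ae fun i => ?_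
      simp only [hQh]
      filter_upwards [condexp_mulVec_ae (MeasurableSpace.comap B inferInstance) Q hint1 i] with ω hω
      rw [hω]
      simp [Matrix.mulVec, dotProduct, mul_sub, Finset.sum_sub_distrib]
    rw [step, covMatrix_mulVec P Q
      (fun ω k => h ω k - (P[fun ω' => h ω' k | MeasurableSpace.comap B inferInstance]) ω)
      (fun k => (hcomp k).sub (memℒp_two_condexp hmB (hcomp k)))]
    rfl
  refine ⟨e1, e2, e3, ?_, ?_, ?_, ?_⟩
  · intro _ _
    rw [e1, e3, trace_conj hQ2, trace_conj hQ2]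
  · intro _ _
    rw [e2, e3, trace_conj hQ2, trace_conj hQ2]
  · intro _ _
    rw [e1, e3, frob_conj hQ2, frob_conj hQ2]
  · intro _ _
    rw [e2, e3, frob_conj hQ2, frob_conj hQ2]
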